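/- Let E be a complex Banach algebra, n₀ a positive integer, L a constant with 0 < L < 1, and φ : E × E → [0,∞) a function satisfying φ(2x, 2y) ≤ 2L·φ(x, y) for all x, y ∈ E. Suppose f : E → E satisfies f(0) = 0, ‖D_λ f(x,y)‖ ≤ φ(x,y) for all x, y ∈ E and all λ ∈ T¹_{1/n₀}, ‖f(xy) − f(y)f(x)‖ ≤ φ(x,y) for all x, y ∈ E, and for every x ∈ E the limits below exist and satisfy lim_{m→∞} 2^{−m} f(2^m · lim_{n→∞} 2^{−n} f(2^n x)) = x. Then there exists a unique involution I : E → E satisfying ‖I(x) − f(x)‖ ≤ (L/(1−L))·φ(x, 0) for all x ∈ E; moreover I(x) = lim_{n→∞} 2^{−n} f(2^n x) for every x ∈ E. -/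

import Mathlib

open Filter Topology

/-- `D_λ f (x, y) = 2 conj(λ) f((x+y)/2) - f(λx) - f(λy)`. -/
noncomputable def jensenDiff {E : Type*} [NormedRing E] [NormedAlgebra ℂ E]
    (f : E → E) (l : ℂ) (x y : E) : E :=
  (2 * (starRingEnd ℂ) l) • f ((2 : ℂ)⁻¹ • (x + y)) - f (l • x) - f (l • y)

/-- The arc `T¹_{1/n₀} = {e^{iθ} : 0 ≤ θ ≤ 1/n₀}` of the unit circle. -/
def unitArc (n₀ : ℕ) : Set ℂ :=
  {l : ℂ | ∃ θ : ℝ, 0 ≤ θ ∧ θ ≤ 1 / (n₀ : ℝ) ∧ l = Complex.exp (θ * Complex.I)}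

/-- An involution on a complex algebra: conjugate-linear, anti-multiplicative,
and an involution of order two. -/
def IsInvolution {E : Type*} [NormedRing E] [NormedAlgebra ℂ E] (I : E → E) : Prop :=
  (∀ (x y : E) (l m : ℂ),
      I (l • x + m • y) = (starRingEnd ℂ) l • I x + (starRingEnd ℂ) m • I y) ∧
  (∀ x y : E, I (x * y) = I y * I x) ∧
  (∀ x : E, I (I x) = x)

theorem stability_involution_direct {E : Type*} [NormedRing E] [NormedAlgebra ℂ E] [CompleteSpace E]
    (n₀ : ℕ) (hn₀ : 0 < n₀) (L : ℝ) (hL0 : 0 < L) (hL1 : L < 1)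
    (φ : E → E → ℝ) (hφ0 : ∀ x y : E, 0 ≤ φ x y)
    (hφ : ∀ x y : E, φ ((2 : ℂ) • x) ((2 : ℂ) • y) ≤ 2 * L * φ x y)
    (f : E → E) (hf0 : f 0 = 0)
    (hD : ∀ x y : E, ∀ l ∈ unitArc n₀, ‖jensenDiff f l x y‖ ≤ φ x y)
    (hmul : ∀ x y : E, ‖f (x * y) - f y * f x‖ ≤ φ x y)
    (hlim : ∀ x : E, ∃ y : E,
      Tendsto (fun n : ℕ => ((2 : ℂ) ^ n)⁻¹ • f ((2 : ℂ) ^ n • x)) atTop (𝓝 y) ∧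
      Tendsto (fun m : ℕ => ((2 : ℂ) ^ m)⁻¹ • f ((2 : ℂ) ^ m • y)) atTop (𝓝 x)) :
    ∃ I : E → E, IsInvolution I ∧
      (∀ x : E, ‖I x - f x‖ ≤ L / (1 - L) * φ x 0) ∧
      (∀ x : E,
        Tendsto (fun n : ℕ => ((2 : ℂ) ^ n)⁻¹ • f ((2 : ℂ) ^ n • x)) atTop (𝓝 (I x))) ∧
      (∀ J : E → E, IsInvolution J →
        (∀ x : E, ‖J x - f x‖ ≤ L / (1 - L) * φ x 0) → J = I) := by
  classical
  choose Ifun hI1 hI2 using hlim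
  -- basic iterated estimate on φ
  have hφn : ∀ (n : ℕ) (x y : E), φ ((2:ℂ)^n • x) ((2:ℂ)^n • y) ≤ (2*L)^n * φ x y := by
    intro n
    induction n with
    | zero => intro x y; simp
    | succ n ih =>
      intro x y
      have h1 : ((2:ℂ)^(n+1)) • x = (2:ℂ) • ((2:ℂ)^n • x) := by
        rw [smul_smul, ← pow_succ']
      have h2' : ((2:ℂ)^(n+1)) • y = (2:ℂ) • ((2:ℂ)^n • y) := by
        rw [smul_smul, ← pow_succ']
      rw [h1, h2']
      calc φ ((2:ℂ) • ((2:ℂ)^n • x)) ((2:ℂ) • ((2:ℂ)^n • y))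
          ≤ 2 * L * φ ((2:ℂ)^n • x) ((2:ℂ)^n • y) := hφ _ _
        _ ≤ 2 * L * ((2*L)^n * φ x y) := by
            have := ih x y
            nlinarith [hφ0 ((2:ℂ)^n • x) ((2:ℂ)^n • y)]
        _ = (2*L)^(n+1) * φ x y := by ring
  have harc1 : (1:ℂ) ∈ unitArc n₀ := ⟨0, le_refl 0, by positivity, by simp⟩
  have hnorm2n : ∀ n : ℕ, ‖((2:ℂ)^n)⁻¹‖ = (2:ℝ)⁻¹ ^ n := by
    intro n; rw [norm_inv, norm_pow]; simp [inv_pow]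
  -- one-step estimate
  have hstep : ∀ x : E, ‖f x - (2:ℂ)⁻¹ • f ((2:ℂ) • x)‖ ≤ L * φ x 0 := by
    intro x
    have hd := hD ((2:ℂ) • x) 0 1 harc1
    have e1 : (2:ℂ)⁻¹ • ((2:ℂ) • x + 0) = x := by
      rw [add_zero, smul_smul]; norm_num
    simp only [jensenDiff, map_one, mul_one, one_smul, smul_zero, hf0, sub_zero, e1] at hd
    have e2 : f x - (2:ℂ)⁻¹ • f ((2:ℂ) • x) = (2:ℂ)⁻¹ • ((2:ℂ) • f x - f ((2:ℂ) • x)) := by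
      rw [smul_sub, smul_smul]; norm_num
    have hphi : φ ((2:ℂ) • x) 0 ≤ 2 * L * φ x 0 := by
      have := hφ x 0; simpa using this
    rw [e2, norm_smul]
    have h21 : ‖(2:ℂ)⁻¹‖ = 2⁻¹ := by simp
    rw [h21]
    calc 2⁻¹ * ‖(2:ℂ) • f x - f ((2:ℂ) • x)‖ ≤ 2⁻¹ * (2 * L * φ x 0) := by
          have := le_trans hd hphi; linarith [norm_nonneg ((2:ℂ) • f x - f ((2:ℂ) • x))]
      _ = L * φ x 0 := by ring
  -- Cauchy-type estimate
  have hcauchy : ∀ (x : E) (n : ℕ),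
      ‖((2:ℂ)^n)⁻¹ • f ((2:ℂ)^n • x) - ((2:ℂ)^(n+1))⁻¹ • f ((2:ℂ)^(n+1) • x)‖
        ≤ L^(n+1) * φ x 0 := by
    intro x n
    have e1 : ((2:ℂ)^n)⁻¹ • f ((2:ℂ)^n • x) - ((2:ℂ)^(n+1))⁻¹ • f ((2:ℂ)^(n+1) • x)
        = ((2:ℂ)^n)⁻¹ • (f ((2:ℂ)^n • x) - (2:ℂ)⁻¹ • f ((2:ℂ) • ((2:ℂ)^n • x))) := by
      rw [smul_sub, smul_smul, smul_smul, ← pow_succ']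
      congr 2
      rw [mul_comm, ← mul_inv, ← pow_succ']
    rw [e1, norm_smul, hnorm2n]
    have h1 := hstep ((2:ℂ)^n • x)
    have h2 : φ ((2:ℂ)^n • x) 0 ≤ (2*L)^n * φ x 0 := by
      have := hφn n x 0; simpa using this
    have h3 : ‖f ((2:ℂ)^n • x) - (2:ℂ)⁻¹ • f ((2:ℂ) • ((2:ℂ)^n • x))‖ ≤ L * ((2*L)^n * φ x 0) :=
      le_trans h1 (by nlinarith)
    calc (2:ℝ)⁻¹^n * ‖f ((2:ℂ)^n • x) - (2:ℂ)⁻¹ • f ((2:ℂ) • ((2:ℂ)^n • x))‖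
        ≤ (2:ℝ)⁻¹^n * (L * ((2*L)^n * φ x 0)) := by
          apply mul_le_mul_of_nonneg_left h3 (by positivity)
      _ = L^(n+1) * φ x 0 := by
          rw [mul_pow, inv_pow]; field_simp; ring
  -- finite-stage bound
  have hbound0 : ∀ (x : E) (m : ℕ),
      ‖f x - ((2:ℂ)^m)⁻¹ • f ((2:ℂ)^m • x)‖ ≤ L / (1 - L) * φ x 0 := by
    intro x m
    have key := dist_le_range_sum_dist (fun n => ((2:ℂ)^n)⁻¹ • f ((2:ℂ)^n • x)) m
    simp only [dist_eq_norm] at key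
    have e0 : ((2:ℂ)^0)⁻¹ • f ((2:ℂ)^0 • x) = f x := by simp
    rw [e0] at key
    have hsum : ∑ i ∈ Finset.range m,
        ‖((2:ℂ)^i)⁻¹ • f ((2:ℂ)^i • x) - ((2:ℂ)^(i+1))⁻¹ • f ((2:ℂ)^(i+1) • x)‖
        ≤ ∑ i ∈ Finset.range m, L^(i+1) * φ x 0 :=
      Finset.sum_le_sum (fun i _ => hcauchy x i)
    have hgeo : ∑ i ∈ Finset.range m, L^(i+1) * φ x 0 ≤ L / (1 - L) * φ x 0 := by
      have h1 : ∑ i ∈ Finset.range m, L^(i+1) * φ x 0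
          = (∑ i ∈ Finset.range m, L^i) * (L * φ x 0) := by
        rw [Finset.sum_mul]
        apply Finset.sum_congr rfl
        intro i _; ring
      rw [h1]
      have h2 : ∑ i ∈ Finset.range m, L^i = (1 - L^m) / (1 - L) := by
        rw [geom_sum_eq hL1.ne]
        rw [div_eq_div_iff (by linarith) (by linarith)]
        ring
      rw [h2]
      have hLm : 0 ≤ L^m := by positivity
      have hLm1 : L^m ≤ 1 := pow_le_one₀ hL0.le hL1.le
      have hφx := hφ0 x 0
      rw [div_mul_eq_mul_div, div_mul_eq_mul_div,
        div_le_div_iff₀ (by linarith) (by linarith)]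
      nlinarith [mul_nonneg (mul_nonneg hLm (mul_nonneg hL0.le hφx)) (by linarith : (0:ℝ) ≤ 1 - L)]
    exact le_trans key (le_trans hsum hgeo)
  -- limit bound
  have hIub : ∀ x : E, ‖f x - Ifun x‖ ≤ L / (1 - L) * φ x 0 := by
    intro x
    have ht : Tendsto (fun m : ℕ => ‖f x - ((2:ℂ)^m)⁻¹ • f ((2:ℂ)^m • x)‖) atTop
        (𝓝 ‖f x - Ifun x‖) := (tendsto_const_nhds.sub (hI1 x)).norm
    exact le_of_tendsto' ht (fun m => hbound0 x m)
  -- squeeze helper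
  have hsq : ∀ (r C : ℝ), 0 ≤ r → r < 1 → ∀ s : ℕ → E,
      (∀ n, ‖s n‖ ≤ r ^ n * C) → Tendsto s atTop (𝓝 0) := by
    intro r C hr0 hr1 s hs
    apply squeeze_zero_norm hs
    have : Tendsto (fun n : ℕ => r ^ n * C) atTop (𝓝 (0 * C)) :=
      (tendsto_pow_atTop_nhds_zero_of_lt_one hr0 hr1).mul_const C
    simpa using this
  -- arc homogeneity
  have hhom_arc : ∀ l ∈ unitArc n₀, ∀ x : E,
      Ifun (l • x) = (starRingEnd ℂ) l • Ifun x := by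
    intro l hl x
    have key : ∀ n : ℕ, ‖(starRingEnd ℂ) l • (((2:ℂ)^n)⁻¹ • f ((2:ℂ)^n • x))
        - ((2:ℂ)^(n+1))⁻¹ • f ((2:ℂ)^(n+1) • (l • x))‖ ≤ L ^ n * (L * φ x 0) := by
      intro n
      have hd := hD ((2:ℂ)^(n+1) • x) 0 l hl
      have e1 : (2:ℂ)⁻¹ • ((2:ℂ)^(n+1) • x + 0) = (2:ℂ)^n • x := by
        rw [add_zero]; module
      have e2 : l • ((2:ℂ)^(n+1) • x) = (2:ℂ)^(n+1) • (l • x) := smul_comm _ _ _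
      rw [jensenDiff, e1, e2, smul_zero, hf0, sub_zero] at hd
      have e4 : (starRingEnd ℂ) l • (((2:ℂ)^n)⁻¹ • f ((2:ℂ)^n • x))
          - ((2:ℂ)^(n+1))⁻¹ • f ((2:ℂ)^(n+1) • (l • x))
          = ((2:ℂ)^(n+1))⁻¹ • ((2 * (starRingEnd ℂ) l) • f ((2:ℂ)^n • x)
              - f ((2:ℂ)^(n+1) • (l • x))) := by
        module
      rw [e4, norm_smul, hnorm2n]
      have hb : φ ((2:ℂ)^(n+1) • x) 0 ≤ (2*L)^(n+1) * φ x 0 := by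
        simpa using hφn (n+1) x 0
      calc (2:ℝ)⁻¹^(n+1) * ‖(2 * (starRingEnd ℂ) l) • f ((2:ℂ)^n • x)
            - f ((2:ℂ)^(n+1) • (l • x))‖
          ≤ (2:ℝ)⁻¹^(n+1) * ((2*L)^(n+1) * φ x 0) := by
            apply mul_le_mul_of_nonneg_left (le_trans hd hb) (by positivity)
        _ = L ^ n * (L * φ x 0) := by
            rw [mul_pow, inv_pow]; field_simp; ring
    have t1 : Tendsto (fun n : ℕ => (starRingEnd ℂ) l • (((2:ℂ)^n)⁻¹ • f ((2:ℂ)^n • x))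
        - ((2:ℂ)^(n+1))⁻¹ • f ((2:ℂ)^(n+1) • (l • x))) atTop
        (𝓝 ((starRingEnd ℂ) l • Ifun x - Ifun (l • x))) := by
      exact ((hI1 x).const_smul _).sub ((hI1 (l • x)).comp (tendsto_add_atTop_nat 1))
    have t2 := hsq L (L * φ x 0) hL0.le hL1 _ key
    have h0 := tendsto_nhds_unique t1 t2
    symm
    exact sub_eq_zero.mp h0
  -- additivity
  have hadd : ∀ x y : E, Ifun (x + y) = Ifun x + Ifun y := by
    intro x y
    have key : ∀ n : ℕ, ‖((2:ℂ)^n)⁻¹ • f ((2:ℂ)^n • (x+y))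
        - (((2:ℂ)^(n+1))⁻¹ • f ((2:ℂ)^(n+1) • x) + ((2:ℂ)^(n+1))⁻¹ • f ((2:ℂ)^(n+1) • y))‖
        ≤ L ^ n * (L * φ x y) := by
      intro n
      have hd := hD ((2:ℂ)^(n+1) • x) ((2:ℂ)^(n+1) • y) 1 harc1
      have e1 : (2:ℂ)⁻¹ • ((2:ℂ)^(n+1) • x + (2:ℂ)^(n+1) • y) = (2:ℂ)^n • (x + y) := by
        module
      rw [jensenDiff, e1, map_one, mul_one, one_smul, one_smul] at hd
      have e4 : ((2:ℂ)^n)⁻¹ • f ((2:ℂ)^n • (x+y))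
          - (((2:ℂ)^(n+1))⁻¹ • f ((2:ℂ)^(n+1) • x) + ((2:ℂ)^(n+1))⁻¹ • f ((2:ℂ)^(n+1) • y))
          = ((2:ℂ)^(n+1))⁻¹ • ((2:ℂ) • f ((2:ℂ)^n • (x+y))
              - f ((2:ℂ)^(n+1) • x) - f ((2:ℂ)^(n+1) • y)) := by
        module
      rw [e4, norm_smul, hnorm2n]
      have hb : φ ((2:ℂ)^(n+1) • x) ((2:ℂ)^(n+1) • y) ≤ (2*L)^(n+1) * φ x y :=
        hφn (n+1) x y
      calc (2:ℝ)⁻¹^(n+1) * ‖(2:ℂ) • f ((2:ℂ)^n • (x+y)) - f ((2:ℂ)^(n+1) • x)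
            - f ((2:ℂ)^(n+1) • y)‖
          ≤ (2:ℝ)⁻¹^(n+1) * ((2*L)^(n+1) * φ x y) := by
            apply mul_le_mul_of_nonneg_left (le_trans hd hb) (by positivity)
        _ = L ^ n * (L * φ x y) := by rw [mul_pow, inv_pow]; field_simp; ring
    have t1 : Tendsto (fun n : ℕ => ((2:ℂ)^n)⁻¹ • f ((2:ℂ)^n • (x+y))
        - (((2:ℂ)^(n+1))⁻¹ • f ((2:ℂ)^(n+1) • x) + ((2:ℂ)^(n+1))⁻¹ • f ((2:ℂ)^(n+1) • y)))
        atTop (𝓝 (Ifun (x+y) - (Ifun x + Ifun y))) := by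
      exact (hI1 (x+y)).sub (((hI1 x).comp (tendsto_add_atTop_nat 1)).add
        ((hI1 y).comp (tendsto_add_atTop_nat 1)))
    have t2 := hsq L (L * φ x y) hL0.le hL1 _ key
    exact sub_eq_zero.mp (tendsto_nhds_unique t1 t2)
  -- antimultiplicativity
  have hmulI : ∀ x y : E, Ifun (x * y) = Ifun y * Ifun x := by
    intro x y
    have htwon : Tendsto (fun n : ℕ => 2 * n) atTop atTop :=
      tendsto_atTop_atTop.mpr (fun b => ⟨b, fun n hn => by omega⟩)
    have key : ∀ n : ℕ, ‖((2:ℂ)^(2*n))⁻¹ • f ((2:ℂ)^(2*n) • (x*y))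
        - (((2:ℂ)^n)⁻¹ • f ((2:ℂ)^n • y)) * (((2:ℂ)^n)⁻¹ • f ((2:ℂ)^n • x))‖
        ≤ (L/2) ^ n * φ x y := by
      intro n
      have e1 : (2:ℂ)^(2*n) • (x * y) = ((2:ℂ)^n • x) * ((2:ℂ)^n • y) := by
        rw [smul_mul_smul_comm, ← pow_add, two_mul]
      have e2 : (((2:ℂ)^n)⁻¹ • f ((2:ℂ)^n • y)) * (((2:ℂ)^n)⁻¹ • f ((2:ℂ)^n • x))
          = ((2:ℂ)^(2*n))⁻¹ • (f ((2:ℂ)^n • y) * f ((2:ℂ)^n • x)) := by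
        rw [smul_mul_smul_comm, ← mul_inv, ← pow_add, two_mul]
      rw [e1, e2, ← smul_sub, norm_smul, hnorm2n]
      have hd := hmul ((2:ℂ)^n • x) ((2:ℂ)^n • y)
      have hb := hφn n x y
      calc (2:ℝ)⁻¹^(2*n) * ‖f (((2:ℂ)^n • x) * ((2:ℂ)^n • y))
            - f ((2:ℂ)^n • y) * f ((2:ℂ)^n • x)‖
          ≤ (2:ℝ)⁻¹^(2*n) * ((2*L)^n * φ x y) := by
            apply mul_le_mul_of_nonneg_left (le_trans hd hb) (by positivity)
        _ = (L/2) ^ n * φ x y := by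
            have h48 : (2:ℝ)⁻¹^(2*n) * (2*L)^n = (L/2)^n := by
              rw [pow_mul, ← mul_pow]; congr 1; ring
            rw [← mul_assoc, h48]
    have t1 : Tendsto (fun n : ℕ => ((2:ℂ)^(2*n))⁻¹ • f ((2:ℂ)^(2*n) • (x*y))
        - (((2:ℂ)^n)⁻¹ • f ((2:ℂ)^n • y)) * (((2:ℂ)^n)⁻¹ • f ((2:ℂ)^n • x)))
        atTop (𝓝 (Ifun (x*y) - Ifun y * Ifun x)) := by
      exact ((hI1 (x*y)).comp htwon).sub ((hI1 y).mul (hI1 x))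
    have t2 := hsq (L/2) (φ x y) (by positivity) (by linarith) _ key
    exact sub_eq_zero.mp (tendsto_nhds_unique t1 t2)
  -- involution of order two
  have hinv : ∀ x : E, Ifun (Ifun x) = x := fun x =>
    tendsto_nhds_unique (hI1 (Ifun x)) (hI2 x)
  -- conjugate homogeneity
  have hconj : ∀ (c : ℂ) (x : E), Ifun (c • x) = (starRingEnd ℂ) c • Ifun x := by
    have hI0 : Ifun 0 = 0 := by
      have h := hadd 0 0
      rw [add_zero] at h
      nth_rewrite 1 [← add_zero (Ifun 0)] at h
      exact (add_left_cancel h).symm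
    have hneg : ∀ x : E, Ifun (-x) = -Ifun x := by
      intro x
      have h := hadd x (-x)
      rw [add_neg_cancel, hI0] at h
      exact eq_neg_of_add_eq_zero_right h.symm
    have h2smul : ∀ x : E, Ifun ((2:ℂ) • x) = (2:ℂ) • Ifun x := by
      intro x
      have h := hadd x x
      have e : (2:ℂ) • x = x + x := two_smul ℂ x
      rw [e, h, two_smul]
    have hhalf : ∀ x : E, Ifun ((2:ℂ)⁻¹ • x) = (2:ℂ)⁻¹ • Ifun x := by
      intro x
      have h := h2smul ((2:ℂ)⁻¹ • x)
      rw [smul_smul] at h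
      norm_num at h
      rw [h, smul_smul]
      norm_num
    have hnat : ∀ (n : ℕ) (x : E), Ifun ((n:ℂ) • x) = (n:ℂ) • Ifun x := by
      intro n
      induction n with
      | zero => intro x; simp [hI0]
      | succ n ih =>
        intro x
        have e : ((n+1 : ℕ) : ℂ) • x = (n:ℂ) • x + x := by
          push_cast; rw [add_smul, one_smul]
        rw [e, hadd, ih]
        push_cast; rw [add_smul, one_smul]
    have hconjexp : ∀ s : ℝ, (starRingEnd ℂ) (Complex.exp (s * Complex.I))
        = Complex.exp ((-s : ℝ) * Complex.I) := by
      intro s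
      rw [← Complex.exp_conj]
      congr 1
      rw [map_mul, Complex.conj_I, Complex.conj_ofReal]
      push_cast; ring
    have hiter : ∀ (m : ℕ) (α : ℝ), 0 ≤ α → α ≤ 1 / (n₀:ℝ) → ∀ x : E,
        Ifun (Complex.exp ((m * α : ℝ) * Complex.I) • x)
          = (starRingEnd ℂ) (Complex.exp ((m * α : ℝ) * Complex.I)) • Ifun x := by
      intro m
      induction m with
      | zero => intro α h0 h1 x; norm_num
      | succ m ih =>
        intro α h0 h1 x
        have e : Complex.exp (((m+1 : ℕ) * α : ℝ) * Complex.I)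
            = Complex.exp ((α:ℝ) * Complex.I) * Complex.exp ((m * α : ℝ) * Complex.I) := by
          rw [← Complex.exp_add]
          congr 1
          push_cast; ring
        rw [e, mul_smul, hhom_arc _ ⟨α, h0, h1, rfl⟩, ih α h0 h1, map_mul, mul_smul]
    have hcircle : ∀ (θ : ℝ) (x : E), Ifun (Complex.exp ((θ:ℝ) * Complex.I) • x)
        = (starRingEnd ℂ) (Complex.exp ((θ:ℝ) * Complex.I)) • Ifun x := by
      have hpos : ∀ (θ : ℝ), 0 ≤ θ → ∀ x : E, Ifun (Complex.exp ((θ:ℝ) * Complex.I) • x)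
          = (starRingEnd ℂ) (Complex.exp ((θ:ℝ) * Complex.I)) • Ifun x := by
        intro θ hθ x
        set m : ℕ := ⌈θ * n₀⌉₊ + 1 with hm
        have hmpos : (0:ℝ) < m := by positivity
        have hα0 : 0 ≤ θ / m := by positivity
        have hα1 : θ / m ≤ 1 / (n₀:ℝ) := by
          rw [div_le_div_iff₀ hmpos (by exact_mod_cast hn₀)]
          calc θ * n₀ ≤ ⌈θ * n₀⌉₊ := Nat.le_ceil _
            _ ≤ m := by push_cast [hm]; linarith
            _ = 1 * (m:ℝ) := (one_mul _).symm
        have e : (m : ℝ) * (θ / m) = θ := by field_simp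
        have := hiter m (θ / m) hα0 hα1 x
        rw [e] at this
        exact this
      intro θ x
      rcases le_or_gt 0 θ with h | h
      · exact hpos θ h x
      · have hμ := hpos (-θ) (by linarith) (Complex.exp ((θ:ℝ) * Complex.I) • x)
        rw [smul_smul, ← Complex.exp_add] at hμ
        have e0 : ((-θ:ℝ):ℂ) * Complex.I + (θ:ℝ) * Complex.I = 0 := by push_cast; ring
        rw [e0, Complex.exp_zero, one_smul] at hμ
        have e1 : (starRingEnd ℂ) (Complex.exp ((-θ:ℝ) * Complex.I))
            = Complex.exp ((θ:ℝ) * Complex.I) := by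
          rw [hconjexp]; norm_num
        rw [e1] at hμ
        have hne : Complex.exp ((θ:ℝ) * Complex.I) ≠ 0 := Complex.exp_ne_zero _
        have hthis := congrArg (fun z => (Complex.exp ((θ:ℝ) * Complex.I))⁻¹ • z) hμ
        simp only [smul_smul, inv_mul_cancel₀ hne, one_smul] at hthis
        rw [← hthis, hconjexp θ]
        congr 1
        rw [← Complex.exp_neg]
        congr 1
        push_cast; ring
    have hcos : ∀ (t : ℝ), -1 ≤ t → t ≤ 1 → ∀ x : E,
        Ifun ((t:ℂ) • x) = (t:ℂ) • Ifun x := by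
      intro t ht1 ht2 x
      set θ := Real.arccos t with hθ
      have hc : Real.cos θ = t := Real.cos_arccos ht1 ht2
      have hsc : (t : ℂ) = (2:ℂ)⁻¹ * (Complex.exp ((θ:ℝ) * Complex.I)
          + Complex.exp ((-θ:ℝ) * Complex.I)) := by
        rw [Complex.exp_mul_I, Complex.exp_mul_I]
        push_cast
        rw [Complex.cos_neg, Complex.sin_neg]
        rw [← Complex.ofReal_cos, hc]
        ring
      have e : (t : ℂ) • x = (2:ℂ)⁻¹ • (Complex.exp ((θ:ℝ) * Complex.I) • x
          + Complex.exp ((-θ:ℝ) * Complex.I) • x) := by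
        rw [smul_add, smul_smul, smul_smul, ← add_smul, ← mul_add, ← hsc]
      rw [e, hhalf, hadd, hcircle, hcircle, hconjexp, hconjexp]
      rw [smul_add, smul_smul, smul_smul, ← add_smul]
      congr 1
      rw [hsc]
      push_cast
      ring
    have hreal : ∀ (t : ℝ) (x : E), Ifun ((t:ℂ) • x) = (t:ℂ) • Ifun x := by
      have hpos : ∀ (t : ℝ), 0 ≤ t → ∀ x : E, Ifun ((t:ℂ) • x) = (t:ℂ) • Ifun x := by
        intro t ht x
        set m : ℕ := ⌈t⌉₊ + 1 with hm
        have hmpos : (0:ℝ) < m := by positivity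
        have h1 : t / m ≤ 1 := by
          rw [div_le_one hmpos]
          calc t ≤ ⌈t⌉₊ := Nat.le_ceil _
            _ ≤ m := by push_cast [hm]; linarith
        have h0 : 0 ≤ t / m := by positivity
        have hm0 : (m:ℝ) ≠ 0 := ne_of_gt hmpos
        have hsc2 : ((m:ℕ):ℂ) * ((t/m : ℝ):ℂ) = (t:ℂ) := by
          rw [← Complex.ofReal_natCast, ← Complex.ofReal_mul]
          congr 1
          field_simp
        have e : (t : ℂ) • x = (m:ℂ) • (((t/m : ℝ):ℂ) • x) := by
          rw [smul_smul, hsc2]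
        rw [e, hnat, hcos (t/m) (by linarith) h1, smul_smul, hsc2]
      intro t x
      rcases le_or_gt 0 t with h | h
      · exact hpos t h x
      · have e : (t:ℂ) • x = -(((-t : ℝ):ℂ) • x) := by push_cast; rw [← neg_smul]; ring_nf
        rw [e, hneg, hpos (-t) (by linarith)]
        push_cast
        rw [← neg_smul]
        ring_nf
    intro c x
    rcases eq_or_ne c 0 with rfl | hc
    · simp [hI0]
    · have e : c = (‖c‖ : ℂ) * Complex.exp ((Complex.arg c : ℝ) * Complex.I) :=
        (Complex.norm_mul_exp_arg_mul_I c).symm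
      calc Ifun (c • x) = Ifun ((‖c‖:ℂ) •
            (Complex.exp ((Complex.arg c : ℝ) * Complex.I) • x)) := by
            rw [smul_smul, ← e]
        _ = (starRingEnd ℂ) c • Ifun x := by
            rw [hreal, hcircle, smul_smul]
            congr 1
            conv_rhs => rw [e]
            rw [map_mul]
            congr 1
            rw [Complex.conj_ofReal]
  -- assemble
  refine ⟨Ifun, ⟨?_, hmulI, hinv⟩, ?_, hI1, ?_⟩
  · intro x y l m
    rw [hadd, hconj, hconj]
  · intro x
    rw [norm_sub_rev]
    exact hIub x
  · -- uniqueness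
    intro J hJ hJb
    have hJ2 : ∀ x : E, J ((2:ℂ) • x) = (2:ℂ) • J x := by
      intro x
      have h := hJ.1 x x 1 1
      simp only [one_smul, map_one] at h
      have e : (2:ℂ) • x = x + x := two_smul ℂ x
      rw [e, h, two_smul]
    have hJpow : ∀ (n : ℕ) (x : E), J ((2:ℂ)^n • x) = (2:ℂ)^n • J x := by
      intro n
      induction n with
      | zero => intro x; simp
      | succ n ih =>
        intro x
        have e : ((2:ℂ)^(n+1)) • x = (2:ℂ) • ((2:ℂ)^n • x) := by
          rw [smul_smul, ← pow_succ']
        rw [e, hJ2, ih, smul_smul, ← pow_succ']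
    have hIpow : ∀ (n : ℕ) (x : E), Ifun ((2:ℂ)^n • x) = (2:ℂ)^n • Ifun x := by
      intro n x
      rw [hconj]
      congr 1
      rw [map_pow, map_ofNat]
    funext x
    have hb : ∀ n : ℕ, ‖J x - Ifun x‖ ≤ L ^ n * (2 * (L / (1 - L)) * φ x 0) := by
      intro n
      have e : J x - Ifun x = ((2:ℂ)^n)⁻¹ • (J ((2:ℂ)^n • x) - Ifun ((2:ℂ)^n • x)) := by
        rw [hJpow, hIpow, smul_sub, smul_smul, smul_smul, inv_mul_cancel₀ (pow_ne_zero _ (two_ne_zero)),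
          one_smul, one_smul]
      have h1 : ‖J ((2:ℂ)^n • x) - Ifun ((2:ℂ)^n • x)‖
          ≤ 2 * (L / (1 - L)) * φ ((2:ℂ)^n • x) 0 := by
        have ha := hJb ((2:ℂ)^n • x)
        have hb' := hIub ((2:ℂ)^n • x)
        calc ‖J ((2:ℂ)^n • x) - Ifun ((2:ℂ)^n • x)‖
            ≤ ‖J ((2:ℂ)^n • x) - f ((2:ℂ)^n • x)‖ + ‖f ((2:ℂ)^n • x) - Ifun ((2:ℂ)^n • x)‖ :=
              norm_sub_le_norm_sub_add_norm_sub _ _ _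
          _ ≤ 2 * (L / (1 - L)) * φ ((2:ℂ)^n • x) 0 := by linarith
      have h2 : φ ((2:ℂ)^n • x) 0 ≤ (2*L)^n * φ x 0 := by
        have := hφn n x 0; simpa using this
      rw [e, norm_smul, hnorm2n]
      have h1L : (0:ℝ) < 1 - L := by linarith
      have hC : 0 ≤ 2 * (L / (1 - L)) := by positivity
      calc (2:ℝ)⁻¹^n * ‖J ((2:ℂ)^n • x) - Ifun ((2:ℂ)^n • x)‖
          ≤ (2:ℝ)⁻¹^n * (2 * (L / (1 - L)) * ((2*L)^n * φ x 0)) := by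
            apply mul_le_mul_of_nonneg_left _ (by positivity)
            calc ‖J ((2:ℂ)^n • x) - Ifun ((2:ℂ)^n • x)‖
                ≤ 2 * (L / (1 - L)) * φ ((2:ℂ)^n • x) 0 := h1
              _ ≤ 2 * (L / (1 - L)) * ((2*L)^n * φ x 0) := by
                  apply mul_le_mul_of_nonneg_left h2 hC
        _ = ((2:ℝ)⁻¹^n * (2*L)^n) * (2 * (L / (1 - L)) * φ x 0) := by ring
        _ = L ^ n * (2 * (L / (1 - L)) * φ x 0) := by
            have h49 : (2:ℝ)⁻¹ * (2*L) = L := by ring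
            rw [← mul_pow, h49]
    have ht : Tendsto (fun n : ℕ => L ^ n * (2 * (L / (1 - L)) * φ x 0)) atTop (𝓝 0) := by
      have : Tendsto (fun n : ℕ => L ^ n * (2 * (L / (1 - L)) * φ x 0)) atTop
          (𝓝 (0 * (2 * (L / (1 - L)) * φ x 0))) :=
        (tendsto_pow_atTop_nhds_zero_of_lt_one hL0.le hL1).mul_const _
      simpa using this
    have h0 : ‖J x - Ifun x‖ ≤ 0 := ge_of_tendsto' ht hb
    have := le_antisymm h0 (norm_nonneg _)
    rw [norm_eq_zero] at this
    exact sub_eq_zero.mp this
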